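/- arXiv:1309.6414 — 2 statements merged into one kernel-verified Lean document; each statement's English description precedes it below -/
import Mathlib

section
/- Let d ≥ 1 and α ∈ (1,2). There exists a constant c₁ > 0 depending only on d and α such that for every measurable b : ℝ^d → ℝ^d and every t > 0, sup_{x∈ℝ^d} ∫_{ℝ^d} ( |x−y|^{−(d+1−α)} ∧ t² |x−y|^{−(d+1+α)} ) |b(y)| dy ≤ c₁ M_{|b|}^α(t^{1/α}), where a ∧ b := min{a,b}. -/
open MeasureTheory Filter Topology
open scoped ENNReal RealInnerProductSpace

/-- The Kato-class quantity `M_f^α(r) = sup_x ∫_{B(x,r)} |f(y)| |x-y|^{-(d+1-α)} dy`. -/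
noncomputable def katoSup (d : ℕ) (α : ℝ) (f : EuclideanSpace ℝ (Fin d) → ℝ) (r : ℝ) : ℝ≥0∞ :=
  ⨆ x : EuclideanSpace ℝ (Fin d),
    ∫⁻ y in Metric.ball x r, ENNReal.ofReal (|f y| * ‖x - y‖ ^ (-((d : ℝ) + 1 - α)))

lemma stmt8_nontrivial (d : ℕ) (hd : 1 ≤ d) : Nontrivial (EuclideanSpace ℝ (Fin d)) := by
  apply Module.nontrivial_of_finrank_pos (R := ℝ)
  rw [finrank_euclideanSpace_fin]
  omega

/-- Covering/averaging lemma: the integral of `g ≥ 0` over a ball of radius `R` is at most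
`((R+r)/r)^d` times the sup over balls of radius `r`. -/
lemma stmt8_cover {d : ℕ} (hd : 1 ≤ d) (g : EuclideanSpace ℝ (Fin d) → ℝ≥0∞)
    (hg : Measurable g) (x : EuclideanSpace ℝ (Fin d)) {r R : ℝ} (hr : 0 < r) (hR : 0 < R) :
    ∫⁻ y in Metric.ball x R, g y ≤
      ENNReal.ofReal (((R + r) / r) ^ d) * ⨆ z, ∫⁻ y in Metric.ball z r, g y := by
  haveI := stmt8_nontrivial d hd
  let E := EuclideanSpace ℝ (Fin d)
  set S := ⨆ z : E, ∫⁻ y in Metric.ball z r, g y with hSdef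
  set V1 := (volume : Measure E) (Metric.ball (0 : E) 1) with hV1def
  have hV1_0 : V1 ≠ 0 := (Metric.measure_ball_pos volume _ one_pos).ne'
  have hV1_top : V1 ≠ ⊤ := measure_ball_lt_top.ne
  have hball : ∀ (z : E) (s : ℝ), 0 ≤ s →
      (volume : Measure E) (Metric.ball z s) = ENNReal.ofReal (s ^ d) * V1 := by
    intro z s hs
    rw [hV1def, Measure.addHaar_ball volume z hs, finrank_euclideanSpace_fin]
  set F : E → E → ℝ≥0∞ := fun y z =>
    (Metric.ball x R).indicator g y * (Metric.ball y r).indicator 1 z with hF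
  have hmeas : Measurable (Function.uncurry F) := by
    apply Measurable.mul
    · have hind : Measurable ((Metric.ball x R).indicator g) :=
        hg.indicator Metric.isOpen_ball.measurableSet
      exact hind.comp measurable_fst
    · have heq : (fun p : E × E => (Metric.ball p.1 r).indicator (1 : E → ℝ≥0∞) p.2)
          = ({p : E × E | dist p.2 p.1 < r}).indicator 1 := by
        ext p
        by_cases h : dist p.2 p.1 < r
        · simp [Set.indicator, Metric.mem_ball, h]
        · simp [Set.indicator, Metric.mem_ball, h]
      have : Measurable (fun p : E × E => (Metric.ball p.1 r).indicator (1 : E → ℝ≥0∞) p.2) := by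
        rw [heq]
        exact measurable_one.indicator
          (isOpen_lt (continuous_snd.dist continuous_fst) continuous_const).measurableSet
      exact this
  have key1 : ∫⁻ y, ∫⁻ z, F y z =
      ENNReal.ofReal (r ^ d) * V1 * ∫⁻ y in Metric.ball x R, g y := by
    have h1 : ∀ y : E, ∫⁻ z, F y z
        = (Metric.ball x R).indicator g y * (ENNReal.ofReal (r ^ d) * V1) := by
      intro y
      rw [hF]
      rw [lintegral_const_mul _ (measurable_one.indicator Metric.isOpen_ball.measurableSet)]
      congr 1
      rw [lintegral_indicator Metric.isOpen_ball.measurableSet]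
      simp [hball y r hr.le]
    have hind : Measurable ((Metric.ball x R).indicator g) :=
      hg.indicator Metric.isOpen_ball.measurableSet
    simp only [h1]
    rw [lintegral_mul_const _ hind,
      lintegral_indicator Metric.isOpen_ball.measurableSet]
    ring
  have key2 : ∫⁻ z, ∫⁻ y, F y z ≤ ENNReal.ofReal ((R + r) ^ d) * V1 * S := by
    have hb : ∀ z : E, ∫⁻ y, F y z ≤ (Metric.ball x (R + r)).indicator (fun _ => S) z := by
      intro z
      by_cases hz : z ∈ Metric.ball x (R + r)
      · have hle : ∫⁻ y, F y z ≤ ∫⁻ y, (Metric.ball z r).indicator g y := by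
          apply lintegral_mono
          intro y
          rw [hF]
          by_cases h2 : z ∈ Metric.ball y r
          · have h2' : y ∈ Metric.ball z r := Metric.mem_ball_comm.mp h2
            by_cases h1 : y ∈ Metric.ball x R
            · simp [Set.indicator_of_mem, h1, h2, h2']
            · simp [Set.indicator_of_notMem, h1, Set.indicator_of_mem h2]
          · simp [Set.indicator_of_notMem h2]
        rw [Set.indicator_of_mem hz]
        calc ∫⁻ y, F y z ≤ ∫⁻ y, (Metric.ball z r).indicator g y := hle
          _ = ∫⁻ y in Metric.ball z r, g y :=
              lintegral_indicator Metric.isOpen_ball.measurableSet g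
          _ ≤ S := le_iSup (fun z : E => ∫⁻ y in Metric.ball z r, g y) z
      · have hzero : ∀ y : E, F y z = 0 := by
          intro y
          rw [hF]
          by_cases h1 : y ∈ Metric.ball x R
          · have h2 : z ∉ Metric.ball y r := by
              intro h2
              apply hz
              have d1 : dist y x < R := Metric.mem_ball.mp h1
              have d2 : dist z y < r := Metric.mem_ball.mp h2
              exact Metric.mem_ball.mpr (lt_of_le_of_lt (dist_triangle z y x) (by linarith))
            simp [Set.indicator_of_notMem h2]
          · simp [Set.indicator_of_notMem h1]
        simp [hzero, Set.indicator_of_notMem hz]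
    calc ∫⁻ z, ∫⁻ y, F y z ≤ ∫⁻ z, (Metric.ball x (R + r)).indicator (fun _ => S) z :=
          lintegral_mono hb
      _ = S * (volume : Measure E) (Metric.ball x (R + r)) :=
          lintegral_indicator_const Metric.isOpen_ball.measurableSet S
      _ = ENNReal.ofReal ((R + r) ^ d) * V1 * S := by
          rw [hball x (R + r) (by positivity)]; ring
  have main : ENNReal.ofReal (r ^ d) * V1 * ∫⁻ y in Metric.ball x R, g y
      ≤ ENNReal.ofReal ((R + r) ^ d) * V1 * S := by
    rw [← key1, lintegral_lintegral_swap hmeas.aemeasurable]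
    exact key2
  have hrd : (0 : ℝ) < r ^ d := by positivity
  have hfac0 : ENNReal.ofReal (r ^ d) * V1 ≠ 0 := by
    apply mul_ne_zero _ hV1_0
    simp [ENNReal.ofReal_eq_zero, not_le, hrd]
  have hfactop : ENNReal.ofReal (r ^ d) * V1 ≠ ⊤ := ENNReal.mul_ne_top ENNReal.ofReal_ne_top hV1_top
  have heq : ENNReal.ofReal ((R + r) ^ d) * V1 * S
      = (ENNReal.ofReal (r ^ d) * V1) * (ENNReal.ofReal (((R + r) / r) ^ d) * S) := by
    have h1 : r ^ d * ((R + r) / r) ^ d = (R + r) ^ d := by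
      rw [div_pow, mul_div_cancel₀ _ (by positivity : r ^ d ≠ 0)]
    rw [← h1, ENNReal.ofReal_mul hrd.le]
    ring
  rw [heq] at main
  exact (ENNReal.mul_le_mul_iff_right hfac0 hfactop).mp main

/-- Bound on the plain integral of `‖b‖` over a ball via `katoSup`. -/
lemma stmt8_kato {d : ℕ} (hd : 1 ≤ d) {α : ℝ} (hα1 : 1 < α) (hα2 : α < 2)
    (b : EuclideanSpace ℝ (Fin d) → EuclideanSpace ℝ (Fin d)) {r : ℝ} (hr : 0 < r)
    (z : EuclideanSpace ℝ (Fin d)) :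
    ∫⁻ y in Metric.ball z r, ENNReal.ofReal ‖b y‖ ≤
      ENNReal.ofReal (r ^ ((d : ℝ) + 1 - α)) * katoSup d α (fun y => ‖b y‖) r := by
  haveI := stmt8_nontrivial d hd
  let E := EuclideanSpace ℝ (Fin d)
  haveI : (𝓝[≠] (0 : E)).NeBot := Module.punctured_nhds_neBot ℝ E 0
  have hβ : 0 < (d : ℝ) + 1 - α := by
    have : (1 : ℝ) ≤ d := by exact_mod_cast hd
    linarith
  have hzs : ∀ᵐ y : E ∂volume, y ≠ z := by
    refine ae_iff.mpr ?_
    have : {y : E | ¬ y ≠ z} = {z} := by ext y; simp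
    rw [this]
    exact measure_singleton z
  calc ∫⁻ y in Metric.ball z r, ENNReal.ofReal ‖b y‖
      ≤ ∫⁻ y in Metric.ball z r, ENNReal.ofReal (r ^ ((d : ℝ) + 1 - α)) *
          ENNReal.ofReal (|‖b y‖| * ‖z - y‖ ^ (-((d : ℝ) + 1 - α))) := by
        apply lintegral_mono_ae
        filter_upwards [ae_restrict_mem Metric.isOpen_ball.measurableSet,
          ae_restrict_of_ae hzs] with y hy hyz
        rw [← ENNReal.ofReal_mul (by positivity)]
        apply ENNReal.ofReal_le_ofReal
        have h1 : 0 < ‖z - y‖ := by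
          rw [norm_sub_pos_iff]
          exact Ne.symm hyz
        have h2 : ‖z - y‖ ≤ r := by
          have := Metric.mem_ball.mp hy
          rw [dist_eq_norm] at this
          rw [norm_sub_rev]
          exact this.le
        have h3 : r ^ (-((d : ℝ) + 1 - α)) ≤ ‖z - y‖ ^ (-((d : ℝ) + 1 - α)) :=
          Real.rpow_le_rpow_of_nonpos h1 h2 (by linarith)
        have h4 : (0 : ℝ) < r ^ ((d : ℝ) + 1 - α) := Real.rpow_pos_of_pos hr _
        have h5 : r ^ ((d : ℝ) + 1 - α) * r ^ (-((d : ℝ) + 1 - α)) = 1 := by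
          rw [← Real.rpow_add hr]; simp
        rw [abs_norm]
        calc ‖b y‖ = r ^ ((d : ℝ) + 1 - α) * (‖b y‖ * r ^ (-((d : ℝ) + 1 - α))) := by
              rw [show r ^ ((d:ℝ)+1-α) * (‖b y‖ * r ^ (-((d:ℝ)+1-α)))
                  = ‖b y‖ * (r ^ ((d:ℝ)+1-α) * r ^ (-((d:ℝ)+1-α))) by ring, h5, mul_one]
          _ ≤ r ^ ((d : ℝ) + 1 - α) * (‖b y‖ * ‖z - y‖ ^ (-((d : ℝ) + 1 - α))) := by
              apply mul_le_mul_of_nonneg_left _ h4.le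
              exact mul_le_mul_of_nonneg_left h3 (norm_nonneg _)
    _ = ENNReal.ofReal (r ^ ((d : ℝ) + 1 - α)) *
          ∫⁻ y in Metric.ball z r, ENNReal.ofReal (|‖b y‖| * ‖z - y‖ ^ (-((d : ℝ) + 1 - α))) :=
        lintegral_const_mul' _ _ ENNReal.ofReal_ne_top
    _ ≤ ENNReal.ofReal (r ^ ((d : ℝ) + 1 - α)) * katoSup d α (fun y => ‖b y‖) r := by
        gcongr
        exact le_iSup (fun x : E => ∫⁻ y in Metric.ball x r,
          ENNReal.ofReal (|‖b y‖| * ‖x - y‖ ^ (-((d : ℝ) + 1 - α)))) z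

/-- The coefficient arithmetic for the annulus pieces. -/
lemma stmt8_coef {d : ℕ} {α r : ℝ} (hα1 : 1 < α) (hα2 : α < 2) (hr : 0 < r) (k : ℕ) :
    (r ^ α) ^ 2 * ((2 : ℝ) ^ k * r) ^ (-((d : ℝ) + 1 + α)) * ((2 : ℝ) ^ (k + 1) + 1) ^ d *
      r ^ ((d : ℝ) + 1 - α) ≤ 4 ^ d * (2⁻¹ : ℝ) ^ k := by
  have h2k : (0 : ℝ) < 2 ^ k := by positivity
  have h2k1 : (1 : ℝ) ≤ 2 ^ k := one_le_pow₀ one_le_two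
  have hr2 : (r ^ α) ^ 2 = r ^ (2 * α) := by
    rw [← Real.rpow_natCast (r ^ α) 2, ← Real.rpow_mul hr.le]
    norm_num
    ring_nf
  have hrprod : r ^ (2 * α) * r ^ (-((d : ℝ) + 1 + α)) * r ^ ((d : ℝ) + 1 - α) = 1 := by
    rw [← Real.rpow_add hr, ← Real.rpow_add hr]
    rw [show 2 * α + -((d : ℝ) + 1 + α) + ((d : ℝ) + 1 - α) = 0 by ring, Real.rpow_zero]
  have hsplit : ((2 : ℝ) ^ k * r) ^ (-((d : ℝ) + 1 + α))
      = ((2 : ℝ) ^ k) ^ (-((d : ℝ) + 1 + α)) * r ^ (-((d : ℝ) + 1 + α)) :=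
    Real.mul_rpow h2k.le hr.le
  have hmain : (r ^ α) ^ 2 * ((2 : ℝ) ^ k * r) ^ (-((d : ℝ) + 1 + α)) *
        ((2 : ℝ) ^ (k + 1) + 1) ^ d * r ^ ((d : ℝ) + 1 - α)
      = ((2 : ℝ) ^ k) ^ (-((d : ℝ) + 1 + α)) * ((2 : ℝ) ^ (k + 1) + 1) ^ d := by
    rw [hr2, hsplit]
    calc r ^ (2 * α) * (((2 : ℝ) ^ k) ^ (-((d : ℝ) + 1 + α)) * r ^ (-((d : ℝ) + 1 + α))) *
          ((2 : ℝ) ^ (k + 1) + 1) ^ d * r ^ ((d : ℝ) + 1 - α)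
        = (r ^ (2 * α) * r ^ (-((d : ℝ) + 1 + α)) * r ^ ((d : ℝ) + 1 - α)) *
          (((2 : ℝ) ^ k) ^ (-((d : ℝ) + 1 + α)) * ((2 : ℝ) ^ (k + 1) + 1) ^ d) := by ring
      _ = ((2 : ℝ) ^ k) ^ (-((d : ℝ) + 1 + α)) * ((2 : ℝ) ^ (k + 1) + 1) ^ d := by
          rw [hrprod, one_mul]
  rw [hmain]
  have hA : ((2 : ℝ) ^ (k + 1) + 1) ^ d ≤ ((2 : ℝ) ^ k) ^ d * 4 ^ d := by
    rw [← mul_pow]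
    apply pow_le_pow_left₀ (by positivity)
    have : (1 : ℝ) ≤ 2 ^ (k + 1) := one_le_pow₀ one_le_two
    calc (2 : ℝ) ^ (k + 1) + 1 ≤ 2 ^ (k + 1) + 2 ^ (k + 1) := by linarith
      _ = 2 ^ k * 4 := by ring
  calc ((2 : ℝ) ^ k) ^ (-((d : ℝ) + 1 + α)) * ((2 : ℝ) ^ (k + 1) + 1) ^ d
      ≤ ((2 : ℝ) ^ k) ^ (-((d : ℝ) + 1 + α)) * (((2 : ℝ) ^ k) ^ d * 4 ^ d) := by
        apply mul_le_mul_of_nonneg_left hA (Real.rpow_nonneg h2k.le _)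
    _ = (((2 : ℝ) ^ k) ^ (-((d : ℝ) + 1 + α)) * ((2 : ℝ) ^ k) ^ (d : ℝ)) * 4 ^ d := by
        rw [Real.rpow_natCast]; ring
    _ = ((2 : ℝ) ^ k) ^ (-(1 + α)) * 4 ^ d := by
        rw [← Real.rpow_add h2k]
        congr 2
        ring
    _ ≤ ((2 : ℝ) ^ k) ^ (-(1 : ℝ)) * 4 ^ d := by
        apply mul_le_mul_of_nonneg_right _ (by positivity)
        exact Real.rpow_le_rpow_of_exponent_le h2k1 (by linarith)
    _ = 4 ^ d * (2⁻¹ : ℝ) ^ k := by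
        rw [Real.rpow_neg_one, ← inv_pow]
        ring

/-- there is `c₁ = c₁(d,α)` such that for every measurable `b : ℝ^d → ℝ^d`
and `t > 0`,
`sup_x ∫ (|x-y|^{-(d+1-α)} ∧ t²|x-y|^{-(d+1+α)}) |b(y)| dy ≤ c₁ M_{|b|}^α(t^{1/α})`. -/
theorem stmt8 (d : ℕ) (hd : 1 ≤ d) (α : ℝ) (hα1 : 1 < α) (hα2 : α < 2) :
    ∃ c₁ : ℝ, 0 < c₁ ∧
      ∀ b : EuclideanSpace ℝ (Fin d) → EuclideanSpace ℝ (Fin d), Measurable b →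
        ∀ t : ℝ, 0 < t →
          (⨆ x : EuclideanSpace ℝ (Fin d), ∫⁻ y,
            ENNReal.ofReal
              (min (‖x - y‖ ^ (-((d : ℝ) + 1 - α))) (t ^ 2 * ‖x - y‖ ^ (-((d : ℝ) + 1 + α))))
              * ENNReal.ofReal ‖b y‖)
          ≤ ENNReal.ofReal c₁ * katoSup d α (fun y => ‖b y‖) (t ^ α⁻¹) := by
  refine ⟨1 + 2 * 4 ^ d, by positivity, ?_⟩
  intro b hb t ht
  let E := EuclideanSpace ℝ (Fin d)
  set r : ℝ := t ^ α⁻¹ with hrdef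
  have hr : 0 < r := Real.rpow_pos_of_pos ht _
  have hrα : r ^ α = t := by
    rw [hrdef, ← Real.rpow_mul ht.le, inv_mul_cancel₀ (by linarith : α ≠ 0), Real.rpow_one]
  set K := katoSup d α (fun y => ‖b y‖) r with hKdef
  set g : E → ℝ≥0∞ := fun y => ENNReal.ofReal ‖b y‖ with hgdef
  have hgmeas : Measurable g := hb.norm.ennreal_ofReal
  set S := ⨆ z : E, ∫⁻ y in Metric.ball z r, g y with hSdef
  have hSK : S ≤ ENNReal.ofReal (r ^ ((d : ℝ) + 1 - α)) * K :=
    iSup_le fun z => stmt8_kato hd hα1 hα2 b hr z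
  apply iSup_le
  intro x
  set f : E → ℝ≥0∞ := fun y => ENNReal.ofReal
      (min (‖x - y‖ ^ (-((d : ℝ) + 1 - α))) (t ^ 2 * ‖x - y‖ ^ (-((d : ℝ) + 1 + α))))
      * ENNReal.ofReal ‖b y‖ with hfdef
  set A : ℕ → Set E := fun k =>
    Metric.ball x (2 ^ (k + 1) * r) \ Metric.ball x (2 ^ k * r) with hAdef
  have hcover : (Set.univ : Set E) ⊆ Metric.ball x r ∪ ⋃ k, A k := by
    intro y _
    by_cases hy : y ∈ Metric.ball x r
    · exact Or.inl hy
    · right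
      have hyr : r ≤ dist y x := by simpa [Metric.mem_ball, not_lt] using hy
      have hex : ∃ k : ℕ, dist y x < 2 ^ (k + 1) * r := by
        obtain ⟨k, hk⟩ := pow_unbounded_of_one_lt (dist y x / r) (by norm_num : (1 : ℝ) < 2)
        refine ⟨k, ?_⟩
        rw [div_lt_iff₀ hr] at hk
        calc dist y x < 2 ^ k * r := hk
          _ ≤ 2 ^ (k + 1) * r := by
              apply mul_le_mul_of_nonneg_right _ hr.le
              exact pow_le_pow_right₀ one_le_two (Nat.le_succ k)
      set k0 := Nat.find hex with hk0
      refine Set.mem_iUnion.mpr ⟨k0, Metric.mem_ball.mpr (Nat.find_spec hex), ?_⟩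
      simp only [Metric.mem_ball, not_lt]
      rcases Nat.eq_zero_or_pos k0 with h0 | h0
      · rw [h0]; simpa using hyr
      · have hmin := Nat.find_min hex (show k0 - 1 < k0 from Nat.sub_lt h0 one_pos)
        rw [Nat.sub_add_cancel h0] at hmin
        exact not_lt.mp hmin
  have hball_part : ∫⁻ y in Metric.ball x r, f y ≤ K := by
    calc ∫⁻ y in Metric.ball x r, f y
        ≤ ∫⁻ y in Metric.ball x r,
            ENNReal.ofReal (|‖b y‖| * ‖x - y‖ ^ (-((d : ℝ) + 1 - α))) := by
          apply lintegral_mono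
          intro y
          rw [hfdef]
          have h0 : (0 : ℝ) ≤ ‖x - y‖ ^ (-((d : ℝ) + 1 - α)) :=
            Real.rpow_nonneg (norm_nonneg _) _
          calc ENNReal.ofReal
                (min (‖x - y‖ ^ (-((d : ℝ) + 1 - α))) (t ^ 2 * ‖x - y‖ ^ (-((d : ℝ) + 1 + α))))
                * ENNReal.ofReal ‖b y‖
              ≤ ENNReal.ofReal (‖x - y‖ ^ (-((d : ℝ) + 1 - α))) * ENNReal.ofReal ‖b y‖ :=
                mul_le_mul_left (ENNReal.ofReal_le_ofReal (min_le_left _ _)) _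
            _ = ENNReal.ofReal (|‖b y‖| * ‖x - y‖ ^ (-((d : ℝ) + 1 - α))) := by
                rw [← ENNReal.ofReal_mul h0, abs_norm, mul_comm]
      _ ≤ K := le_iSup (fun z : E => ∫⁻ y in Metric.ball z r,
            ENNReal.ofReal (|‖b y‖| * ‖z - y‖ ^ (-((d : ℝ) + 1 - α)))) x
  have hterm : ∀ k : ℕ, ∫⁻ y in A k, f y ≤ ENNReal.ofReal (4 ^ d * (2⁻¹ : ℝ) ^ k) * K := by
    intro k
    set c : ℝ := (r ^ α) ^ 2 * ((2 : ℝ) ^ k * r) ^ (-((d : ℝ) + 1 + α)) with hcdef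
    have hc0 : 0 ≤ c := by
      apply mul_nonneg (by positivity)
      exact Real.rpow_nonneg (by positivity) _
    have hAmeas : MeasurableSet (A k) :=
      Metric.isOpen_ball.measurableSet.diff Metric.isOpen_ball.measurableSet
    have hstep1 : ∫⁻ y in A k, f y ≤ ∫⁻ y in A k, ENNReal.ofReal c * g y := by
      apply lintegral_mono_ae
      filter_upwards [ae_restrict_mem hAmeas] with y hy
      obtain ⟨hy1, hy2⟩ := hy
      have hdist : 2 ^ k * r ≤ ‖x - y‖ := by
        have h := Metric.mem_ball.not.mp hy2
        rw [not_lt] at h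
        rw [show ‖x - y‖ = dist y x by rw [dist_comm, dist_eq_norm]]
        exact h
      have hpos : (0 : ℝ) < 2 ^ k * r := by positivity
      rw [hfdef, hgdef]
      apply mul_le_mul_left
      apply ENNReal.ofReal_le_ofReal
      calc min (‖x - y‖ ^ (-((d : ℝ) + 1 - α))) (t ^ 2 * ‖x - y‖ ^ (-((d : ℝ) + 1 + α)))
          ≤ t ^ 2 * ‖x - y‖ ^ (-((d : ℝ) + 1 + α)) := min_le_right _ _
        _ ≤ t ^ 2 * ((2 : ℝ) ^ k * r) ^ (-((d : ℝ) + 1 + α)) := by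
            apply mul_le_mul_of_nonneg_left _ (sq_nonneg t)
            apply Real.rpow_le_rpow_of_nonpos hpos hdist
            have : (0 : ℝ) ≤ (d : ℝ) := Nat.cast_nonneg d
            linarith
        _ = c := by rw [hcdef, hrα]
    have hstep2 : ∫⁻ y in A k, ENNReal.ofReal c * g y
        = ENNReal.ofReal c * ∫⁻ y in A k, g y :=
      lintegral_const_mul' _ _ ENNReal.ofReal_ne_top
    have hstep3 : ∫⁻ y in A k, g y ≤ ∫⁻ y in Metric.ball x (2 ^ (k + 1) * r), g y :=
      lintegral_mono_set Set.diff_subset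
    have hstep4 : ∫⁻ y in Metric.ball x (2 ^ (k + 1) * r), g y
        ≤ ENNReal.ofReal (((2 ^ (k + 1) * r + r) / r) ^ d) * S :=
      stmt8_cover hd g hgmeas x hr (by positivity)
    have hratio : ((2 : ℝ) ^ (k + 1) * r + r) / r = 2 ^ (k + 1) + 1 := by
      field_simp
    calc ∫⁻ y in A k, f y
        ≤ ENNReal.ofReal c * ∫⁻ y in A k, g y := by rw [← hstep2]; exact hstep1
      _ ≤ ENNReal.ofReal c * (ENNReal.ofReal (((2 : ℝ) ^ (k + 1) + 1) ^ d) *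
            (ENNReal.ofReal (r ^ ((d : ℝ) + 1 - α)) * K)) := by
          apply mul_le_mul_right
          rw [← hratio]
          exact le_trans hstep3 (le_trans hstep4 (mul_le_mul_right hSK _))
      _ = ENNReal.ofReal (c * ((2 : ℝ) ^ (k + 1) + 1) ^ d * r ^ ((d : ℝ) + 1 - α)) * K := by
          rw [ENNReal.ofReal_mul (by positivity : (0:ℝ) ≤ c * ((2 : ℝ) ^ (k + 1) + 1) ^ d),
            ENNReal.ofReal_mul hc0]
          ring
      _ ≤ ENNReal.ofReal (4 ^ d * (2⁻¹ : ℝ) ^ k) * K := by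
          apply mul_le_mul_left
          apply ENNReal.ofReal_le_ofReal
          rw [hcdef]
          exact stmt8_coef hα1 hα2 hr k
  have htsum : ∑' k : ℕ, ENNReal.ofReal (4 ^ d * (2⁻¹ : ℝ) ^ k) * K
      = ENNReal.ofReal (4 ^ d) * 2 * K := by
    rw [ENNReal.tsum_mul_right]
    congr 1
    have h1 : ∀ k : ℕ, ENNReal.ofReal (4 ^ d * (2⁻¹ : ℝ) ^ k)
        = ENNReal.ofReal (4 ^ d) * (2⁻¹ : ℝ≥0∞) ^ k := by
      intro k
      have h2 : ENNReal.ofReal ((2:ℝ)⁻¹) = (2⁻¹ : ℝ≥0∞) := by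
        rw [ENNReal.ofReal_inv_of_pos (by norm_num : (0:ℝ) < 2)]
        norm_num
      rw [ENNReal.ofReal_mul (by positivity)]
      congr 1
      rw [ENNReal.ofReal_pow (show (0:ℝ) ≤ 2⁻¹ by norm_num), h2]
    simp_rw [h1]
    rw [ENNReal.tsum_mul_left, ENNReal.tsum_geometric, ENNReal.one_sub_inv_two, inv_inv]
  calc ∫⁻ y, f y = ∫⁻ y in Set.univ, f y := (setLIntegral_univ _).symm
    _ ≤ ∫⁻ y in Metric.ball x r ∪ ⋃ k, A k, f y := lintegral_mono_set hcover
    _ ≤ (∫⁻ y in Metric.ball x r, f y) + ∫⁻ y in ⋃ k, A k, f y := lintegral_union_le _ _ _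
    _ ≤ K + ∑' k : ℕ, ∫⁻ y in A k, f y := add_le_add hball_part (lintegral_iUnion_le _ _)
    _ ≤ K + ∑' k : ℕ, ENNReal.ofReal (4 ^ d * (2⁻¹ : ℝ) ^ k) * K :=
        add_le_add le_rfl (ENNReal.tsum_le_tsum hterm)
    _ = K + ENNReal.ofReal (4 ^ d) * 2 * K := by rw [htsum]
    _ = ENNReal.ofReal (1 + 2 * 4 ^ d) * K := by
        rw [ENNReal.ofReal_add (by norm_num) (by positivity), ENNReal.ofReal_one,
          ENNReal.ofReal_mul (by norm_num), add_mul, one_mul]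
        congr 1
        rw [show ENNReal.ofReal 2 = 2 by norm_num]
        ring
end

section
/- Let d ≥ 1, α ∈ (1,2), T₀ > 0, C₁ ≥ 1, and set f(t,x,y) := t^{−d/α} ∧ t |x−y|^{−(d+α)}. Suppose q : (0,∞)×ℝ^d×ℝ^d → [0,∞) is measurable, satisfies the Chapman–Kolmogorov equation q(s+t,x,y) = ∫_{ℝ^d} q(s,x,z) q(t,z,y) dz for all s,t > 0 and x,y ∈ ℝ^d, and satisfies C₁^{−1} f(t,x,y) ≤ q(t,x,y) ≤ C₁ f(t,x,y) for all (t,x,y) ∈ (0,T₀]×ℝ^d×ℝ^d. Then there exist constants C₂ ≥ 1 and C₃ > 0, depending only on d, α, T₀ and C₁, such that C₂^{−1} e^{−C₃ t} f(t,x,y) ≤ q(t,x,y) ≤ C₂ e^{C₃ t} f(t,x,y) for every t > 0 and x,y ∈ ℝ^d. -/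
open MeasureTheory Filter Topology
open scoped ENNReal NNReal

/-- The comparison function `f(t,x,y) = t^{-d/α} ∧ t|x-y|^{-(d+α)}`, valued in `[0,∞]`
so that it equals `t^{-d/α}` when `x = y`. -/
noncomputable def heatBnd (d : ℕ) (α : ℝ) (t : ℝ) (x y : EuclideanSpace ℝ (Fin d)) : ℝ≥0∞ :=
  min (ENNReal.ofReal t ^ (-(d : ℝ) / α)) (ENNReal.ofReal t * (‖x - y‖₊ : ℝ≥0∞) ^ (-((d : ℝ) + α)))

namespace Stmt12

lemma rpow_anti {a b : ℝ≥0∞} {p : ℝ} (hp : 0 ≤ p) (h : a ≤ b) : b ^ (-p) ≤ a ^ (-p) := by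
  rw [ENNReal.rpow_neg, ENNReal.rpow_neg]
  exact ENNReal.inv_le_inv.2 (ENNReal.rpow_le_rpow h hp)

lemma two_rpow_add (a b : ℝ) : (2 : ℝ≥0∞) ^ (a + b) = 2 ^ a * 2 ^ b :=
  ENNReal.rpow_add a b two_ne_zero ENNReal.ofNat_ne_top

lemma two_mul_rpow (y : ℝ≥0∞) (z : ℝ) : ((2 : ℝ≥0∞) * y) ^ z = 2 ^ z * y ^ z := by
  rcases eq_or_ne y 0 with rfl | h0
  · rcases lt_trichotomy z 0 with hz | rfl | hz
    · simp [ENNReal.zero_rpow_of_neg hz, ENNReal.mul_top (a := (2:ℝ≥0∞) ^ z)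
        (by simp [ENNReal.rpow_eq_zero_iff])]
    · simp
    · simp [ENNReal.zero_rpow_of_pos hz]
  · rcases eq_or_ne y ⊤ with rfl | ht
    · rcases lt_trichotomy z 0 with hz | rfl | hz
      · simp [ENNReal.top_rpow_of_neg hz, ENNReal.mul_top (two_ne_zero)]
      · simp
      · simp [ENNReal.top_rpow_of_pos hz, ENNReal.mul_top (two_ne_zero),
          ENNReal.mul_top (a := (2:ℝ≥0∞) ^ z) (by simp [ENNReal.rpow_eq_zero_iff])]
    · exact ENNReal.mul_rpow_of_ne_top (by norm_num) ht z

noncomputable def ballC (d : ℕ) : ℝ≥0∞ :=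
  ENNReal.ofReal (Real.sqrt Real.pi ^ d / Real.Gamma (d / 2 + 1))

lemma ballC_pos (d : ℕ) : 0 < ballC d := by
  apply ENNReal.ofReal_pos.2
  apply div_pos (pow_pos (Real.sqrt_pos.2 Real.pi_pos) d)
  exact Real.Gamma_pos_of_pos (by positivity)

lemma ballC_ne_top (d : ℕ) : ballC d ≠ ⊤ := ENNReal.ofReal_ne_top

lemma volume_ball {d : ℕ} (hd : 1 ≤ d) (x : EuclideanSpace ℝ (Fin d)) (r : ℝ) :
    volume (Metric.ball x r) = ENNReal.ofReal r ^ d * ballC d := by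
  haveI : Nonempty (Fin d) := ⟨⟨0, hd⟩⟩
  rw [EuclideanSpace.volume_ball (Fin d) x r]
  simp [ballC, Fintype.card_fin]

lemma exists_dyadic {u : ℝ} (hu : 1 ≤ u) : ∃ k : ℕ, (2 : ℝ) ^ k ≤ u ∧ u < 2 ^ (k + 1) := by
  obtain ⟨n, hn⟩ := pow_unbounded_of_one_lt u (one_lt_two (α := ℝ))
  have hP : ∃ m : ℕ, u < 2 ^ (m + 1) :=
    ⟨n, hn.trans_le (pow_le_pow_right₀ one_le_two (Nat.le_succ n))⟩
  classical
  refine ⟨Nat.find hP, ?_, Nat.find_spec hP⟩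
  rcases Nat.eq_zero_or_pos (Nat.find hP) with hk | hk
  · simpa [hk] using hu
  · obtain ⟨j, hj⟩ := Nat.exists_eq_succ_of_ne_zero hk.ne'
    have := Nat.find_min hP (m := j) (by omega)
    push_neg at this
    simpa [hj] using this

noncomputable def tailC (d : ℕ) (α : ℝ) : ℝ≥0∞ :=
  2 ^ (d : ℝ) * (1 - 2 ^ (-α))⁻¹ * ballC d

lemma tailC_ne_top (d : ℕ) {α : ℝ} (hα : 0 < α) : tailC d α ≠ ⊤ := by
  have h1 : (2 : ℝ≥0∞) ^ (-α) < 1 :=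
    ENNReal.rpow_lt_one_of_one_lt_of_neg (by norm_num : (1:ℝ≥0∞) < 2) (by linarith : -α < 0)
  apply ENNReal.mul_ne_top
  apply ENNReal.mul_ne_top
  · simp [ENNReal.rpow_eq_top_iff]
  · simp only [ne_eq, ENNReal.inv_eq_top]
    exact fun h => absurd h (by simp [tsub_eq_zero_iff_le, not_le, h1])
  · exact ballC_ne_top d

lemma tailC_pos (d : ℕ) (α : ℝ) : 0 < tailC d α := by
  apply ENNReal.mul_pos _ (ballC_pos d).ne'
  apply mul_ne_zero
  · simp [ENNReal.rpow_eq_zero_iff]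
  · simp

lemma tail {d : ℕ} (hd : 1 ≤ d) {α : ℝ} (hα : 0 < α) {R : ℝ} (hR : 0 < R)
    (x : EuclideanSpace ℝ (Fin d)) :
    ∫⁻ z in (Metric.ball x R)ᶜ, (‖x - z‖₊ : ℝ≥0∞) ^ (-((d : ℝ) + α)) ≤
      ENNReal.ofReal R ^ (-α) * tailC d α := by
  set p : ℝ := (d : ℝ) + α with hp
  have hp0 : 0 ≤ p := by positivity
  set Rh := ENNReal.ofReal R with hRhdef
  have hRh0 : Rh ≠ 0 := by simp [hRhdef, hR]
  have hRht : Rh ≠ ⊤ := ENNReal.ofReal_ne_top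
  set A : ℕ → Set (EuclideanSpace ℝ (Fin d)) :=
    fun k => {z | 2 ^ k * R ≤ dist x z} ∩ Metric.ball x (2 ^ (k + 1) * R) with hA
  have hAm : ∀ k, MeasurableSet (A k) := by
    intro k
    exact ((isClosed_le continuous_const (continuous_const.dist continuous_id)).measurableSet).inter
      Metric.isOpen_ball.measurableSet
  have cover : (Metric.ball x R)ᶜ ⊆ ⋃ k, A k := by
    intro z hz
    simp only [Metric.mem_ball, not_lt, Set.mem_compl_iff] at hz
    have hdz : R ≤ dist x z := by rwa [dist_comm]
    have hu : 1 ≤ dist x z / R := (one_le_div hR).2 hdz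
    obtain ⟨k, hk1, hk2⟩ := exists_dyadic hu
    refine Set.mem_iUnion.2 ⟨k, ?_, ?_⟩
    · simpa [le_div_iff₀ hR] using hk1
    · rw [Metric.mem_ball, dist_comm]
      rw [div_lt_iff₀ hR] at hk2
      exact hk2
  have hofR : ∀ m : ℕ, ENNReal.ofReal (2 ^ m * R) = 2 ^ m * Rh := by
    intro m
    rw [ENNReal.ofReal_mul (by positivity), ENNReal.ofReal_pow (by norm_num),
      ENNReal.ofReal_ofNat]
  have bound_k : ∀ k : ℕ, ∫⁻ z in A k, (‖x - z‖₊ : ℝ≥0∞) ^ (-p) ≤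
      (Rh ^ (-α) * (2 ^ (d : ℝ) * ballC d)) * ((2 : ℝ≥0∞) ^ (-α)) ^ k := by
    intro k
    have step1 : ∫⁻ z in A k, (‖x - z‖₊ : ℝ≥0∞) ^ (-p) ≤
        ∫⁻ _ in A k, (ENNReal.ofReal (2 ^ k * R)) ^ (-p) := by
      apply setLIntegral_mono' (hAm k)
      intro z hz
      apply rpow_anti hp0
      have : ENNReal.ofReal (2 ^ k * R) ≤ ENNReal.ofReal (dist x z) :=
        ENNReal.ofReal_le_ofReal hz.1
      rwa [dist_eq_norm, ofReal_norm, enorm_eq_nnnorm] at this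
    have step2 : ∫⁻ _ in A k, (ENNReal.ofReal (2 ^ k * R)) ^ (-p) ≤
        (ENNReal.ofReal (2 ^ k * R)) ^ (-p) * ((2 : ℝ≥0∞) ^ (k + 1)) ^ d * Rh ^ d * ballC d := by
      rw [setLIntegral_const]
      have : volume (A k) ≤ volume (Metric.ball x (2 ^ (k + 1) * R)) :=
        measure_mono Set.inter_subset_right
      rw [volume_ball hd] at this
      calc (ENNReal.ofReal (2 ^ k * R)) ^ (-p) * volume (A k) ≤
            (ENNReal.ofReal (2 ^ k * R)) ^ (-p) *
              (ENNReal.ofReal (2 ^ (k + 1) * R) ^ d * ballC d) := mul_le_mul_right this _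
        _ = _ := by
            rw [hofR (k + 1), mul_pow]
            ring
    refine (step1.trans step2).trans (le_of_eq ?_)
    have h2k : ((2 : ℝ≥0∞) ^ (k : ℝ)) ≠ 0 := by simp [ENNReal.rpow_eq_zero_iff]
    have hRhe : Rh ^ (-p) * Rh ^ ((d : ℕ) : ℝ) = Rh ^ (-α) := by
      rw [← ENNReal.rpow_add _ _ hRh0 hRht]
      congr 1
      push_cast [hp]
      ring
    have h2e : (2 : ℝ≥0∞) ^ ((k : ℝ) * (-p)) * 2 ^ ((((k + 1) * d : ℕ)) : ℝ) =
        2 ^ ((d : ℕ) : ℝ) * ((2 : ℝ≥0∞) ^ (-α)) ^ k := by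
      rw [← ENNReal.rpow_natCast ((2 : ℝ≥0∞) ^ (-α)) k, ← ENNReal.rpow_mul, ← two_rpow_add,
        ← two_rpow_add]
      congr 1
      push_cast [hp]
      ring
    calc ENNReal.ofReal (2 ^ k * R) ^ (-p) * ((2 : ℝ≥0∞) ^ (k + 1)) ^ d * Rh ^ d * ballC d
        = ((2 : ℝ≥0∞) ^ (k : ℝ)) ^ (-p) * Rh ^ (-p) * 2 ^ ((((k + 1) * d : ℕ)) : ℝ) *
            Rh ^ ((d : ℕ) : ℝ) * ballC d := by
          rw [hofR k, ← ENNReal.rpow_natCast (2 : ℝ≥0∞) k,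
            ENNReal.mul_rpow_of_ne_zero h2k hRh0, ← pow_mul,
            ← ENNReal.rpow_natCast (2 : ℝ≥0∞) ((k + 1) * d), ← ENNReal.rpow_natCast Rh d]
      _ = (Rh ^ (-p) * Rh ^ ((d : ℕ) : ℝ)) *
            ((2 : ℝ≥0∞) ^ ((k : ℝ) * (-p)) * 2 ^ ((((k + 1) * d : ℕ)) : ℝ)) * ballC d := by
          rw [← ENNReal.rpow_mul]
          ring
      _ = Rh ^ (-α) * (2 ^ ((d : ℕ) : ℝ) * ((2 : ℝ≥0∞) ^ (-α)) ^ k) * ballC d := by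
          rw [hRhe, h2e]
      _ = (Rh ^ (-α) * (2 ^ (d : ℝ) * ballC d)) * ((2 : ℝ≥0∞) ^ (-α)) ^ k := by
          ring
  calc ∫⁻ z in (Metric.ball x R)ᶜ, (‖x - z‖₊ : ℝ≥0∞) ^ (-p)
      ≤ ∫⁻ z in ⋃ k, A k, (‖x - z‖₊ : ℝ≥0∞) ^ (-p) := lintegral_mono_set cover
    _ ≤ ∑' k, ∫⁻ z in A k, (‖x - z‖₊ : ℝ≥0∞) ^ (-p) := lintegral_iUnion_le _ _
    _ ≤ ∑' k, (Rh ^ (-α) * (2 ^ (d : ℝ) * ballC d)) * ((2 : ℝ≥0∞) ^ (-α)) ^ k :=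
        ENNReal.tsum_le_tsum bound_k
    _ = (Rh ^ (-α) * (2 ^ (d : ℝ) * ballC d)) * (1 - 2 ^ (-α))⁻¹ := by
        rw [ENNReal.tsum_mul_left, ENNReal.tsum_geometric]
    _ = Rh ^ (-α) * tailC d α := by simp only [tailC]; ring

noncomputable def massC (d : ℕ) (α : ℝ) : ℝ≥0∞ := ballC d + tailC d α

lemma massC_ne_top (d : ℕ) {α : ℝ} (hα : 0 < α) : massC d α ≠ ⊤ :=
  ENNReal.add_ne_top.2 ⟨ballC_ne_top d, tailC_ne_top d hα⟩

lemma massC_pos (d : ℕ) (α : ℝ) : 0 < massC d α :=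
  lt_of_lt_of_le (ballC_pos d) le_self_add

lemma const_mul_min (c a b : ℝ≥0∞) : c * min a b = min (c * a) (c * b) := by
  rcases le_total a b with h | h
  · rw [min_eq_left h, min_eq_left (mul_le_mul_right h c)]
  · rw [min_eq_right h, min_eq_right (mul_le_mul_right h c)]

lemma ofReal_two_mul {t : ℝ} : ENNReal.ofReal (2 * t) = 2 * ENNReal.ofReal t := by
  rw [ENNReal.ofReal_mul (by norm_num), ENNReal.ofReal_ofNat]

lemma Rh_pow_d {d : ℕ} {α t : ℝ} (hα : 0 < α) (ht : 0 < t) :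
    ENNReal.ofReal (t ^ α⁻¹) ^ d = ENNReal.ofReal t ^ (α⁻¹ * (d : ℝ)) := by
  rw [← ENNReal.ofReal_rpow_of_pos ht, ← ENNReal.rpow_natCast (ENNReal.ofReal t ^ α⁻¹) d,
    ← ENNReal.rpow_mul]

lemma heatBnd_symm {d : ℕ} {α t : ℝ} (x y : EuclideanSpace ℝ (Fin d)) :
    heatBnd d α t x y = heatBnd d α t y x := by
  rw [heatBnd, heatBnd, show ‖x - y‖₊ = ‖y - x‖₊ by rw [← neg_sub, nnnorm_neg]]

lemma mass {d : ℕ} (hd : 1 ≤ d) {α : ℝ} (hα1 : 1 < α) {t : ℝ} (ht : 0 < t)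
    (x : EuclideanSpace ℝ (Fin d)) :
    ∫⁻ z, heatBnd d α t x z ≤ massC d α := by
  have hα0 : 0 < α := by linarith
  set T := ENNReal.ofReal t with hTdef
  have hT0 : T ≠ 0 := by simp [hTdef, ht]
  have hTt : T ≠ ⊤ := ENNReal.ofReal_ne_top
  set R := t ^ α⁻¹ with hRdef
  have hR : 0 < R := Real.rpow_pos_of_pos ht _
  have hRT : ENNReal.ofReal R = T ^ α⁻¹ := (ENNReal.ofReal_rpow_of_pos ht).symm
  rw [← lintegral_add_compl (fun z => heatBnd d α t x z)
    (Metric.isOpen_ball (x := x) (ε := R)).measurableSet]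
  have part1 : ∫⁻ z in Metric.ball x R, heatBnd d α t x z ≤ ballC d := by
    calc ∫⁻ z in Metric.ball x R, heatBnd d α t x z
        ≤ ∫⁻ _ in Metric.ball x R, T ^ (-(d : ℝ) / α) :=
          setLIntegral_mono' Metric.isOpen_ball.measurableSet fun z _ => min_le_left _ _
      _ = T ^ (-(d : ℝ) / α) * volume (Metric.ball x R) := setLIntegral_const _ _
      _ = T ^ (-(d : ℝ) / α) * (T ^ (α⁻¹ * (d : ℝ)) * ballC d) := by
          rw [volume_ball hd, Rh_pow_d hα0 ht]
      _ = (T ^ (-(d : ℝ) / α) * T ^ (α⁻¹ * (d : ℝ))) * ballC d := by ring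
      _ = ballC d := by
          rw [← ENNReal.rpow_add _ _ hT0 hTt, show -(d : ℝ) / α + α⁻¹ * (d : ℝ) = 0 by
            field_simp; ring, ENNReal.rpow_zero, one_mul]
  have part2 : ∫⁻ z in (Metric.ball x R)ᶜ, heatBnd d α t x z ≤ tailC d α := by
    calc ∫⁻ z in (Metric.ball x R)ᶜ, heatBnd d α t x z
        ≤ ∫⁻ z in (Metric.ball x R)ᶜ, T * (‖x - z‖₊ : ℝ≥0∞) ^ (-((d : ℝ) + α)) :=
          setLIntegral_mono' Metric.isOpen_ball.measurableSet.compl fun z _ => min_le_right _ _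
      _ = T * ∫⁻ z in (Metric.ball x R)ᶜ, (‖x - z‖₊ : ℝ≥0∞) ^ (-((d : ℝ) + α)) :=
          lintegral_const_mul' _ _ hTt
      _ ≤ T * (ENNReal.ofReal R ^ (-α) * tailC d α) := mul_le_mul_right (tail hd hα0 hR x) _
      _ = (T ^ (1 : ℝ) * T ^ (α⁻¹ * (-α))) * tailC d α := by
          rw [hRT, ← ENNReal.rpow_mul, ENNReal.rpow_one]; ring
      _ = tailC d α := by
          rw [← ENNReal.rpow_add _ _ hT0 hTt, show (1 : ℝ) + α⁻¹ * (-α) = 0 by field_simp; ring,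
            ENNReal.rpow_zero, one_mul]
  calc _ ≤ ballC d + tailC d α := add_le_add part1 part2
    _ = massC d α := rfl

lemma mass' {d : ℕ} (hd : 1 ≤ d) {α : ℝ} (hα1 : 1 < α) {t : ℝ} (ht : 0 < t)
    (y : EuclideanSpace ℝ (Fin d)) :
    ∫⁻ z, heatBnd d α t z y ≤ massC d α := by
  simp_rw [fun z => heatBnd_symm (α := α) (t := t) z y]
  exact mass hd hα1 ht y

noncomputable def convC (d : ℕ) (α : ℝ) : ℝ≥0∞ := massC d α * 2 ^ ((d : ℝ) + α + 1)

lemma convC_ne_top (d : ℕ) {α : ℝ} (hα : 0 < α) : convC d α ≠ ⊤ :=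
  ENNReal.mul_ne_top (massC_ne_top d hα) (by simp [ENNReal.rpow_eq_top_iff])

lemma convC_pos (d : ℕ) (α : ℝ) : 0 < convC d α :=
  ENNReal.mul_pos (massC_pos d α).ne' (by simp [ENNReal.rpow_eq_zero_iff])

lemma convU {d : ℕ} (hd : 1 ≤ d) {α : ℝ} (hα1 : 1 < α) {t : ℝ} (ht : 0 < t)
    (x y : EuclideanSpace ℝ (Fin d)) :
    ∫⁻ z, heatBnd d α t x z * heatBnd d α t z y ≤ convC d α * heatBnd d α (2 * t) x y := by
  have hα0 : 0 < α := by linarith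
  set p : ℝ := (d : ℝ) + α with hp
  have hp0 : 0 < p := by positivity
  set T := ENNReal.ofReal t with hTdef
  have hT0 : T ≠ 0 := by simp [hTdef, ht]
  have hTt : T ≠ ⊤ := ENNReal.ofReal_ne_top
  have hT2 : ENNReal.ofReal (2 * t) = 2 * T := ofReal_two_mul
  set e : ℝ := -(d : ℝ) / α with he
  have hTe_ne_top : T ^ e ≠ ⊤ := by
    simp [ENNReal.rpow_eq_top_iff, hT0, hTt]
  have bound1 : ∫⁻ z, heatBnd d α t x z * heatBnd d α t z y ≤
      convC d α * ((2 * T) ^ e) := by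
    calc ∫⁻ z, heatBnd d α t x z * heatBnd d α t z y
        ≤ ∫⁻ z, T ^ e * heatBnd d α t z y :=
          lintegral_mono fun z => mul_le_mul' (min_le_left _ _) le_rfl
      _ = T ^ e * ∫⁻ z, heatBnd d α t z y := lintegral_const_mul' _ _ hTe_ne_top
      _ ≤ T ^ e * massC d α := mul_le_mul_right (mass' hd hα1 ht y) _
      _ = massC d α * 2 ^ (-e) * ((2 * T) ^ e) := by
          have hsplit : T ^ e = 2 ^ (-e) * (2 * T) ^ e := by
            rw [two_mul_rpow, ← mul_assoc, ← two_rpow_add, neg_add_cancel,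
              ENNReal.rpow_zero, one_mul]
          rw [hsplit]; ring
      _ ≤ convC d α * ((2 * T) ^ e) := by
          apply mul_le_mul_left
          apply mul_le_mul_right
          apply ENNReal.rpow_le_rpow_of_exponent_le (by norm_num)
          have h1 : (d : ℝ) / α ≤ d := div_le_self (by positivity) hα1.le
          have h2 : -e = (d : ℝ) / α := by rw [he]; ring
          rw [h2]
          linarith
  have bound2 : ∫⁻ z, heatBnd d α t x z * heatBnd d α t z y ≤
      convC d α * ((2 * T) * (‖x - y‖₊ : ℝ≥0∞) ^ (-p)) := by
    rcases eq_or_ne (‖x - y‖₊) 0 with h0 | h0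
    · have htop : ((‖x - y‖₊ : ℝ≥0∞)) ^ (-p) = ⊤ := by
        rw [h0, ENNReal.coe_zero, ENNReal.zero_rpow_of_neg (by linarith)]
      rw [htop, ENNReal.mul_top (mul_ne_zero two_ne_zero hT0),
        ENNReal.mul_top (convC_pos d α).ne']
      exact le_top
    · set r : ℝ≥0∞ := (‖x - y‖₊ : ℝ≥0∞) with hrdef
      have hr0 : r ≠ 0 := by simp [hrdef, h0]
      have hrt : r ≠ ⊤ := ENNReal.coe_ne_top
      set S₁ : Set (EuclideanSpace ℝ (Fin d)) := {z | ‖x - y‖₊ ≤ 2 * ‖x - z‖₊} with hS₁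
      set S₂ : Set (EuclideanSpace ℝ (Fin d)) := {z | ‖x - y‖₊ ≤ 2 * ‖z - y‖₊} with hS₂
      have hS₁m : MeasurableSet S₁ := by
        apply (isClosed_le continuous_const ?_).measurableSet
        exact (continuous_const.mul ((continuous_const.sub continuous_id).nnnorm))
      have hS₂m : MeasurableSet S₂ := by
        apply (isClosed_le continuous_const ?_).measurableSet
        exact (continuous_const.mul ((continuous_id.sub continuous_const).nnnorm))
      have huniv : (Set.univ : Set (EuclideanSpace ℝ (Fin d))) ⊆ S₁ ∪ S₂ := by
        intro z _
        by_contra hz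
        have h1 : 2 * ‖x - z‖₊ < ‖x - y‖₊ :=
          not_le.1 fun h => hz (Set.mem_union_left _ h)
        have h2 : 2 * ‖z - y‖₊ < ‖x - y‖₊ :=
          not_le.1 fun h => hz (Set.mem_union_right _ h)
        have htri : ‖x - y‖₊ ≤ ‖x - z‖₊ + ‖z - y‖₊ := by
          simpa [sub_add_sub_cancel] using nnnorm_add_le (x - z) (z - y)
        have : 2 * ‖x - y‖₊ < 2 * ‖x - y‖₊ := by
          calc 2 * ‖x - y‖₊ ≤ 2 * (‖x - z‖₊ + ‖z - y‖₊) := by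
                exact mul_le_mul_right htri 2
            _ = 2 * ‖x - z‖₊ + 2 * ‖z - y‖₊ := by ring
            _ < ‖x - y‖₊ + ‖x - y‖₊ := add_lt_add h1 h2
            _ = 2 * ‖x - y‖₊ := by ring
        exact absurd this (lt_irrefl _)
      set c : ℝ≥0∞ := T * (2 ^ p * r ^ (-p)) with hc
      have hcne : c ≠ ⊤ := by
        apply ENNReal.mul_ne_top hTt
        apply ENNReal.mul_ne_top (by simp [ENNReal.rpow_eq_top_iff])
        simp [ENNReal.rpow_eq_top_iff, hr0, hrt]
      have hkey : ∀ (a : ℝ≥0), ‖x - y‖₊ ≤ 2 * a → T * (a : ℝ≥0∞) ^ (-p) ≤ c := by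
        intro a ha
        apply mul_le_mul_right
        have ha' : r / 2 ≤ (a : ℝ≥0∞) := by
          rw [ENNReal.div_le_iff (by norm_num) (by norm_num)]
          calc r ≤ ((2 * a : ℝ≥0) : ℝ≥0∞) := ENNReal.coe_le_coe.2 ha
            _ = (a : ℝ≥0∞) * 2 := by push_cast; ring
        calc (a : ℝ≥0∞) ^ (-p) ≤ (r / 2) ^ (-p) := rpow_anti hp0.le ha'
          _ = 2 ^ p * r ^ (-p) := by
              rw [div_eq_mul_inv, ENNReal.mul_rpow_of_ne_zero hr0 (by norm_num),
                ENNReal.inv_rpow, ENNReal.rpow_neg 2 p, inv_inv, mul_comm]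
      have hb1 : ∫⁻ z in S₁, heatBnd d α t x z * heatBnd d α t z y ≤ c * massC d α := by
        calc ∫⁻ z in S₁, heatBnd d α t x z * heatBnd d α t z y
            ≤ ∫⁻ z in S₁, c * heatBnd d α t z y := by
              apply setLIntegral_mono' hS₁m
              intro z hz
              exact mul_le_mul' ((min_le_right _ _).trans (hkey _ hz)) le_rfl
          _ = c * ∫⁻ z in S₁, heatBnd d α t z y := lintegral_const_mul' _ _ hcne
          _ ≤ c * ∫⁻ z, heatBnd d α t z y := mul_le_mul_right (setLIntegral_le_lintegral _ _) _
          _ ≤ c * massC d α := mul_le_mul_right (mass' hd hα1 ht y) _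
      have hb2 : ∫⁻ z in S₂, heatBnd d α t x z * heatBnd d α t z y ≤ c * massC d α := by
        calc ∫⁻ z in S₂, heatBnd d α t x z * heatBnd d α t z y
            ≤ ∫⁻ z in S₂, heatBnd d α t x z * c := by
              apply setLIntegral_mono' hS₂m
              intro z hz
              refine mul_le_mul' le_rfl ((min_le_right _ _).trans (hkey _ hz))
          _ = c * ∫⁻ z in S₂, heatBnd d α t x z := by
              rw [lintegral_mul_const' _ _ hcne, mul_comm]
          _ ≤ c * ∫⁻ z, heatBnd d α t x z := mul_le_mul_right (setLIntegral_le_lintegral _ _) _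
          _ ≤ c * massC d α := mul_le_mul_right (mass hd hα1 ht x) _
      calc ∫⁻ z, heatBnd d α t x z * heatBnd d α t z y
          = ∫⁻ z in Set.univ, heatBnd d α t x z * heatBnd d α t z y := by
            rw [setLIntegral_univ]
        _ ≤ ∫⁻ z in S₁ ∪ S₂, heatBnd d α t x z * heatBnd d α t z y :=
            lintegral_mono_set huniv
        _ ≤ (∫⁻ z in S₁, heatBnd d α t x z * heatBnd d α t z y) +
              ∫⁻ z in S₂, heatBnd d α t x z * heatBnd d α t z y := lintegral_union_le _ _ _
        _ ≤ c * massC d α + c * massC d α := add_le_add hb1 hb2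
        _ = (massC d α * 2 ^ p) * ((2 * T) * r ^ (-p)) := by rw [hc]; ring
        _ ≤ convC d α * ((2 * T) * r ^ (-p)) := by
            apply mul_le_mul_left
            apply mul_le_mul_right
            exact ENNReal.rpow_le_rpow_of_exponent_le (by norm_num) (by linarith)
  rw [heatBnd, hT2]
  rcases le_total ((2 * T) ^ (-(d : ℝ) / α))
      ((2 * T) * (‖x - y‖₊ : ℝ≥0∞) ^ (-((d : ℝ) + α))) with h | h
  · rw [min_eq_left h]; exact bound1
  · rw [min_eq_right h]; exact bound2

noncomputable def lowC (d : ℕ) (α : ℝ) : ℝ≥0∞ := ballC d * 2 ^ (-((d : ℝ) + α + 1))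

lemma lowC_pos (d : ℕ) (α : ℝ) : 0 < lowC d α :=
  ENNReal.mul_pos (ballC_pos d).ne' (by simp [ENNReal.rpow_eq_zero_iff])

lemma lowC_ne_top (d : ℕ) (α : ℝ) : lowC d α ≠ ⊤ :=
  ENNReal.mul_ne_top (ballC_ne_top d) (by simp [ENNReal.rpow_eq_top_iff])

lemma convL {d : ℕ} (hd : 1 ≤ d) {α : ℝ} (hα1 : 1 < α) {t : ℝ} (ht : 0 < t)
    (x y : EuclideanSpace ℝ (Fin d)) :
    lowC d α * heatBnd d α (2 * t) x y ≤ ∫⁻ z, heatBnd d α t x z * heatBnd d α t z y := by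
  have hα0 : 0 < α := by linarith
  set p : ℝ := (d : ℝ) + α with hp
  have hp0 : 0 < p := by positivity
  set T := ENNReal.ofReal t with hTdef
  have hT0 : T ≠ 0 := by simp [hTdef, ht]
  have hTt : T ≠ ⊤ := ENNReal.ofReal_ne_top
  have hT2 : ENNReal.ofReal (2 * t) = 2 * T := ofReal_two_mul
  set e : ℝ := -(d : ℝ) / α with he
  have he_neg : e < 0 := by
    rw [he]
    apply div_neg_of_neg_of_pos _ hα0
    simp only [neg_neg_iff_pos] at *
    exact_mod_cast Nat.pos_of_ne_zero (by omega)
  set R := t ^ α⁻¹ with hRdef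
  have hR : 0 < R := Real.rpow_pos_of_pos ht _
  set Rh := ENNReal.ofReal R with hRhdef
  have hRT : Rh = T ^ α⁻¹ := (ENNReal.ofReal_rpow_of_pos ht).symm
  set r : ℝ≥0∞ := (‖x - y‖₊ : ℝ≥0∞) with hrdef
  set G := min (T ^ e) (T * r ^ (-p)) with hG
  have hTRh : T * Rh ^ (-p) = T ^ e := by
    calc T * Rh ^ (-p) = T ^ (1 : ℝ) * T ^ (α⁻¹ * -p) := by
          rw [hRT, ← ENNReal.rpow_mul, ENNReal.rpow_one]
      _ = T ^ (1 + α⁻¹ * -p) := (ENNReal.rpow_add _ _ hT0 hTt).symm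
      _ = T ^ e := by
          congr 1
          rw [he, hp]
          field_simp
          ring
  have claim1 : ∀ z ∈ Metric.ball x R, T ^ e ≤ heatBnd d α t x z := by
    intro z hz
    have hz' : (‖x - z‖₊ : ℝ≥0∞) ≤ Rh := by
      rw [← enorm_eq_nnnorm, ← ofReal_norm]
      apply ENNReal.ofReal_le_ofReal
      rw [← dist_eq_norm]
      rw [Metric.mem_ball, dist_comm] at hz
      exact hz.le
    refine le_min le_rfl ?_
    calc T ^ e = T * Rh ^ (-p) := hTRh.symm
      _ ≤ T * (‖x - z‖₊ : ℝ≥0∞) ^ (-p) := mul_le_mul_right (rpow_anti hp0.le hz') _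
  have claim2 : ∀ z ∈ Metric.ball x R, 2 ^ (-p) * G ≤ heatBnd d α t z y := by
    intro z hz
    have h2p1 : (2 : ℝ≥0∞) ^ (-p) ≤ 1 :=
      (ENNReal.rpow_lt_one_of_one_lt_of_neg (by norm_num) (by linarith)).le
    refine le_min ?_ ?_
    · calc 2 ^ (-p) * G ≤ 1 * T ^ e := mul_le_mul' h2p1 (min_le_left _ _)
        _ = T ^ e := one_mul _
    · have hzx : (‖z - x‖₊ : ℝ≥0∞) ≤ Rh := by
        rw [← enorm_eq_nnnorm, ← ofReal_norm]
        apply ENNReal.ofReal_le_ofReal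
        rw [← dist_eq_norm]
        rw [Metric.mem_ball] at hz
        exact hz.le
      have htri : (‖z - y‖₊ : ℝ≥0∞) ≤ Rh + r := by
        calc (‖z - y‖₊ : ℝ≥0∞) ≤ ((‖z - x‖₊ + ‖x - y‖₊ : ℝ≥0) : ℝ≥0∞) := by
              apply ENNReal.coe_le_coe.2
              simpa [sub_add_sub_cancel] using nnnorm_add_le (z - x) (x - y)
          _ = (‖z - x‖₊ : ℝ≥0∞) + r := by push_cast; rfl
          _ ≤ Rh + r := add_le_add hzx le_rfl
      have hmax : Rh + r ≤ 2 * max Rh r := by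
        rw [two_mul]
        exact add_le_add (le_max_left _ _) (le_max_right _ _)
      have hmm : (max Rh r) ^ (-p) = min (Rh ^ (-p)) (r ^ (-p)) := by
        rcases le_total Rh r with h | h
        · rw [max_eq_right h, min_eq_right (rpow_anti hp0.le h)]
        · rw [max_eq_left h, min_eq_left (rpow_anti hp0.le h)]
      calc 2 ^ (-p) * G = 2 ^ (-p) * min (T * Rh ^ (-p)) (T * r ^ (-p)) := by
            rw [hG, hTRh]
        _ = 2 ^ (-p) * (T * min (Rh ^ (-p)) (r ^ (-p))) := by rw [← const_mul_min T]
        _ = T * (2 ^ (-p) * (max Rh r) ^ (-p)) := by rw [hmm]; ring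
        _ = T * ((2 * max Rh r) ^ (-p)) := by rw [two_mul_rpow]
        _ ≤ T * (‖z - y‖₊ : ℝ≥0∞) ^ (-p) :=
            mul_le_mul_right (rpow_anti hp0.le (htri.trans hmax)) _
  have claimG : heatBnd d α (2 * t) x y ≤ 2 * G := by
    rw [heatBnd, hT2, hG, const_mul_min]
    apply min_le_min
    · rw [two_mul_rpow]
      exact mul_le_mul'
        ((ENNReal.rpow_lt_one_of_one_lt_of_neg (by norm_num) he_neg).le.trans one_le_two) le_rfl
    · rw [mul_assoc]
  have hball : volume (Metric.ball x R) = T ^ (α⁻¹ * (d : ℝ)) * ballC d := by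
    rw [volume_ball hd, hRdef, Rh_pow_d hα0 ht]
  have hTT : T ^ e * T ^ (α⁻¹ * (d : ℝ)) = 1 := by
    rw [← ENNReal.rpow_add _ _ hT0 hTt, show e + α⁻¹ * (d : ℝ) = 0 by rw [he]; field_simp; ring,
      ENNReal.rpow_zero]
  have hconst : ∫⁻ _ in Metric.ball x R, T ^ e * (2 ^ (-p) * G) = ballC d * (2 ^ (-p) * G) := by
    rw [setLIntegral_const, hball]
    calc T ^ e * (2 ^ (-p) * G) * (T ^ (α⁻¹ * (d : ℝ)) * ballC d)
        = (T ^ e * T ^ (α⁻¹ * (d : ℝ))) * (ballC d * (2 ^ (-p) * G)) := by ring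
      _ = ballC d * (2 ^ (-p) * G) := by rw [hTT, one_mul]
  have halg : lowC d α * (2 * G) = ballC d * (2 ^ (-p) * G) := by
    simp only [lowC]
    have h2 : (2 : ℝ≥0∞) ^ (-((d : ℝ) + α + 1)) * 2 = 2 ^ (-p) := by
      rw [show -((d : ℝ) + α + 1) = -p + (-1) by rw [hp]; ring, two_rpow_add,
        ENNReal.rpow_neg_one, mul_assoc, ENNReal.inv_mul_cancel two_ne_zero ENNReal.ofNat_ne_top,
        mul_one]
    calc ballC d * 2 ^ (-((d : ℝ) + α + 1)) * (2 * G)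
        = ballC d * ((2 ^ (-((d : ℝ) + α + 1)) * 2) * G) := by ring
      _ = ballC d * (2 ^ (-p) * G) := by rw [h2]
  calc lowC d α * heatBnd d α (2 * t) x y ≤ lowC d α * (2 * G) := mul_le_mul_right claimG _
    _ = ballC d * (2 ^ (-p) * G) := halg
    _ = ∫⁻ _ in Metric.ball x R, T ^ e * (2 ^ (-p) * G) := hconst.symm
    _ ≤ ∫⁻ z in Metric.ball x R, heatBnd d α t x z * heatBnd d α t z y :=
        setLIntegral_mono' Metric.isOpen_ball.measurableSet fun z hz =>
          mul_le_mul' (claim1 z hz) (claim2 z hz)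
    _ ≤ ∫⁻ z, heatBnd d α t x z * heatBnd d α t z y := setLIntegral_le_lintegral _ _

lemma heatBnd_ne_top {d : ℕ} {α t : ℝ} (ht : 0 < t) (x y : EuclideanSpace ℝ (Fin d)) :
    heatBnd d α t x y ≠ ⊤ := by
  have h : (ENNReal.ofReal t) ^ (-(d : ℝ) / α) ≠ ⊤ := by
    simp [ENNReal.rpow_eq_top_iff, ENNReal.ofReal_eq_zero, not_le, ht]
  exact ne_top_of_le_ne_top h (min_le_left _ _)

lemma exists_scale {T₀ t : ℝ} (hT₀ : 0 < T₀) (ht : T₀ / 2 < t) :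
    ∃ (n : ℕ) (s : ℝ), (T₀ / 2 < s ∧ s ≤ T₀) ∧ t = 2 ^ n * s := by
  have htpos : 0 < t := lt_trans (by positivity) ht
  have hu : (1 : ℝ) / 2 < t / T₀ := by
    rw [div_lt_div_iff₀ two_pos hT₀] at *
    nlinarith [ht]
  obtain ⟨n, hn⟩ := pow_unbounded_of_one_lt (t / T₀) (one_lt_two (α := ℝ))
  have hP : ∃ m : ℕ, t / T₀ ≤ 2 ^ m := ⟨n, hn.le⟩
  classical
  set k := Nat.find hP with hkdef
  have hk1 : t / T₀ ≤ 2 ^ k := Nat.find_spec hP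
  have hk2 : 2 ^ k < 2 * (t / T₀) := by
    rcases Nat.eq_zero_or_pos k with hk | hk
    · rw [hk]; norm_num; linarith [hu]
    · obtain ⟨j, hj⟩ := Nat.exists_eq_succ_of_ne_zero hk.ne'
      have := Nat.find_min hP (m := j) (by omega)
      push_neg at this
      rw [hj, pow_succ]; linarith [this]
  refine ⟨k, t / 2 ^ k, ⟨?_, ?_⟩, ?_⟩
  · have h2k : (0:ℝ) < 2 ^ k := by positivity
    rw [lt_div_iff₀ h2k]
    calc T₀ / 2 * 2 ^ k < T₀ / 2 * (2 * (t / T₀)) := by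
          apply mul_lt_mul_of_pos_left hk2 (by positivity)
      _ = t := by field_simp
  · have h2k : (0:ℝ) < 2 ^ k := by positivity
    rw [div_le_iff₀ h2k]
    calc t = t / T₀ * T₀ := by field_simp
      _ ≤ 2 ^ k * T₀ := by apply mul_le_mul_of_nonneg_right hk1 hT₀.le
      _ = T₀ * 2 ^ k := by ring
  · field_simp

end Stmt12


open Stmt12 in
set_option maxHeartbeats 2000000 in
/-- a nonnegative measurable kernel satisfying Chapman–Kolmogorov and
two-sided stable heat kernel bounds on `(0,T₀]` satisfies, up to exponential factors,
the same bounds for all `t > 0`. -/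
theorem stmt12 (d : ℕ) (hd : 1 ≤ d) (α : ℝ) (hα1 : 1 < α) (hα2 : α < 2)
    (T₀ C₁ : ℝ) (hT₀ : 0 < T₀) (hC₁ : 1 ≤ C₁)
    (q : ℝ → EuclideanSpace ℝ (Fin d) → EuclideanSpace ℝ (Fin d) → ℝ)
    (hq0 : ∀ t x y, 0 ≤ q t x y)
    (hqm : Measurable fun p : ℝ × EuclideanSpace ℝ (Fin d) × EuclideanSpace ℝ (Fin d) =>
      q p.1 p.2.1 p.2.2)
    (hck : ∀ s t : ℝ, 0 < s → 0 < t → ∀ x y,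
      q (s + t) x y = ∫ z, q s x z * q t z y)
    (hbd : ∀ t ∈ Set.Ioc (0 : ℝ) T₀, ∀ x y,
      ENNReal.ofReal C₁⁻¹ * heatBnd d α t x y ≤ ENNReal.ofReal (q t x y) ∧
      ENNReal.ofReal (q t x y) ≤ ENNReal.ofReal C₁ * heatBnd d α t x y) :
    ∃ C₂ : ℝ, 1 ≤ C₂ ∧ ∃ C₃ : ℝ, 0 < C₃ ∧ ∀ t : ℝ, 0 < t → ∀ x y,
      ENNReal.ofReal (C₂⁻¹ * Real.exp (-C₃ * t)) * heatBnd d α t x y ≤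
        ENNReal.ofReal (q t x y) ∧
      ENNReal.ofReal (q t x y) ≤ ENNReal.ofReal (C₂ * Real.exp (C₃ * t)) * heatBnd d α t x y := by
  have hα0 : 0 < α := by linarith
  have hC₁0 : 0 < C₁ := by linarith
  have hqz : ∀ (t : ℝ) (x : EuclideanSpace ℝ (Fin d)), Measurable fun z => q t x z :=
    fun t x => hqm.comp (measurable_const.prodMk (measurable_const.prodMk measurable_id))
  have hqz' : ∀ (t : ℝ) (y : EuclideanSpace ℝ (Fin d)), Measurable fun z => q t z y :=
    fun t y => hqm.comp (measurable_const.prodMk (measurable_id.prodMk measurable_const))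
  have bridge_le : ∀ (f : EuclideanSpace ℝ (Fin d) → ℝ), Measurable f → (∀ z, 0 ≤ f z) →
      ENNReal.ofReal (∫ z, f z) ≤ ∫⁻ z, ENNReal.ofReal (f z) := by
    intro f hf h0
    rw [integral_eq_lintegral_of_nonneg_ae (ae_of_all _ h0) hf.aestronglyMeasurable]
    exact ENNReal.ofReal_toReal_le
  have bridge_eq : ∀ (f : EuclideanSpace ℝ (Fin d) → ℝ), Measurable f → (∀ z, 0 ≤ f z) →
      (∫⁻ z, ENNReal.ofReal (f z)) ≠ ⊤ →
      ENNReal.ofReal (∫ z, f z) = ∫⁻ z, ENNReal.ofReal (f z) := by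
    intro f hf h0 hfin
    rw [integral_eq_lintegral_of_nonneg_ae (ae_of_all _ h0) hf.aestronglyMeasurable,
      ENNReal.ofReal_toReal hfin]
  set lam := min (lowC d α) 1 with hlamdef
  set cA := max (convC d α) 1 with hcAdef
  have hlam0 : lam ≠ 0 := (lt_min (lowC_pos d α) one_pos).ne'
  have hlam_le1 : lam ≤ 1 := min_le_right _ _
  have hlamt : lam ≠ ⊤ := ne_top_of_le_ne_top (by norm_num) hlam_le1
  have hcA1 : (1 : ℝ≥0∞) ≤ cA := le_max_right _ _
  have hcA0 : cA ≠ 0 := (one_pos.trans_le hcA1).ne'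
  have hcAt : cA ≠ ⊤ :=
    (max_lt (lt_top_iff_ne_top.2 (convC_ne_top d hα0)) (by norm_num)).ne
  set a := ENNReal.ofReal C₁⁻¹ * lam with hadef
  set b := ENNReal.ofReal C₁ * cA with hbdef
  have hat : a ≠ ⊤ := ENNReal.mul_ne_top ENNReal.ofReal_ne_top hlamt
  have hbt : b ≠ ⊤ := ENNReal.mul_ne_top ENNReal.ofReal_ne_top hcAt
  have convL' : ∀ t : ℝ, 0 < t → ∀ x y, lam * heatBnd d α (2 * t) x y ≤
      ∫⁻ z, heatBnd d α t x z * heatBnd d α t z y := fun t ht x y =>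
    (mul_le_mul_left (min_le_left _ _) _).trans (convL hd hα1 ht x y)
  have convU' : ∀ t : ℝ, 0 < t → ∀ x y,
      (∫⁻ z, heatBnd d α t x z * heatBnd d α t z y) ≤ cA * heatBnd d α (2 * t) x y :=
    fun t ht x y => (convU hd hα1 ht x y).trans (mul_le_mul_left (le_max_left _ _) _)
  have key : ∀ n : ℕ, ∀ s : ℝ, T₀ / 2 < s → s ≤ T₀ → ∀ x y,
      lam⁻¹ * a ^ (2 ^ n) * heatBnd d α (2 ^ n * s) x y ≤
        ENNReal.ofReal (q (2 ^ n * s) x y) ∧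
      ENNReal.ofReal (q (2 ^ n * s) x y) ≤
        cA⁻¹ * b ^ (2 ^ n) * heatBnd d α (2 ^ n * s) x y := by
    intro n
    induction n with
    | zero =>
      intro s hs1 hs2 x y
      have hs0 : 0 < s := lt_trans (by positivity) hs1
      obtain ⟨hl, hu⟩ := hbd s ⟨hs0, hs2⟩ x y
      have h1 : (2 : ℝ) ^ (0 : ℕ) * s = s := by norm_num
      rw [h1]
      have e1 : lam⁻¹ * a ^ (2 ^ (0 : ℕ)) = ENNReal.ofReal C₁⁻¹ := by
        rw [pow_zero, pow_one, hadef, mul_comm (ENNReal.ofReal C₁⁻¹) lam, ← mul_assoc,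
          ENNReal.inv_mul_cancel hlam0 hlamt, one_mul]
      have e2 : cA⁻¹ * b ^ (2 ^ (0 : ℕ)) = ENNReal.ofReal C₁ := by
        rw [pow_zero, pow_one, hbdef, mul_comm (ENNReal.ofReal C₁) cA, ← mul_assoc,
          ENNReal.inv_mul_cancel hcA0 hcAt, one_mul]
      rw [e1, e2]
      exact ⟨hl, hu⟩
    | succ n ih =>
      intro s hs1 hs2 x y
      have hs0 : 0 < s := lt_trans (by positivity) hs1
      set t := (2 : ℝ) ^ n * s with htdef
      have ht0 : 0 < t := mul_pos (pow_pos two_pos n) hs0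
      have hsum : (2 : ℝ) ^ (n + 1) * s = t + t := by rw [htdef]; ring
      have h2t : (2 : ℝ) ^ (n + 1) * s = 2 * t := by rw [htdef]; ring
      have hCK : q ((2 : ℝ) ^ (n + 1) * s) x y = ∫ z, q t x z * q t z y := by
        rw [hsum]; exact hck t t ht0 ht0 x y
      have hmul : ∀ z, ENNReal.ofReal (q t x z * q t z y) =
          ENNReal.ofReal (q t x z) * ENNReal.ofReal (q t z y) :=
        fun z => ENNReal.ofReal_mul (hq0 t x z)
      set U := cA⁻¹ * b ^ (2 ^ n) with hU
      set L := lam⁻¹ * a ^ (2 ^ n) with hL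
      have hUt : U ≠ ⊤ :=
        ENNReal.mul_ne_top (ENNReal.inv_ne_top.2 hcA0) (ENNReal.pow_ne_top hbt)
      have hLt : L ≠ ⊤ :=
        ENNReal.mul_ne_top (ENNReal.inv_ne_top.2 hlam0) (ENNReal.pow_ne_top hat)
      have upper_lint : ∫⁻ z, ENNReal.ofReal (q t x z * q t z y) ≤
          (U * U) * (cA * heatBnd d α (2 * t) x y) := by
        calc ∫⁻ z, ENNReal.ofReal (q t x z * q t z y)
            = ∫⁻ z, ENNReal.ofReal (q t x z) * ENNReal.ofReal (q t z y) := by simp_rw [hmul]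
          _ ≤ ∫⁻ z, (U * heatBnd d α t x z) * (U * heatBnd d α t z y) :=
              lintegral_mono fun z =>
                mul_le_mul' (ih s hs1 hs2 x z).2 (ih s hs1 hs2 z y).2
          _ = ∫⁻ z, (U * U) * (heatBnd d α t x z * heatBnd d α t z y) := by
              simp_rw [mul_mul_mul_comm]
          _ = (U * U) * ∫⁻ z, heatBnd d α t x z * heatBnd d α t z y :=
              lintegral_const_mul' _ _ (ENNReal.mul_ne_top hUt hUt)
          _ ≤ (U * U) * (cA * heatBnd d α (2 * t) x y) :=
              mul_le_mul_right (convU' t ht0 x y) _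
      have hUU : (U * U) * cA = cA⁻¹ * b ^ (2 ^ (n + 1)) := by
        rw [hU]
        have : (2 : ℕ) ^ (n + 1) = 2 ^ n + 2 ^ n := by ring
        rw [this, pow_add]
        calc (cA⁻¹ * b ^ 2 ^ n * (cA⁻¹ * b ^ 2 ^ n)) * cA
            = cA⁻¹ * (b ^ 2 ^ n * b ^ 2 ^ n) * (cA⁻¹ * cA) := by ring
          _ = cA⁻¹ * (b ^ 2 ^ n * b ^ 2 ^ n) := by
              rw [ENNReal.inv_mul_cancel hcA0 hcAt, mul_one]
      have hmeas : Measurable fun z => q t x z * q t z y := (hqz t x).mul (hqz' t y)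
      have hnn : ∀ z, 0 ≤ q t x z * q t z y :=
        fun z => mul_nonneg (hq0 t x z) (hq0 t z y)
      constructor
      · -- lower bound
        have hfin : (∫⁻ z, ENNReal.ofReal (q t x z * q t z y)) ≠ ⊤ := by
          refine ne_top_of_le_ne_top ?_ upper_lint
          exact ENNReal.mul_ne_top (ENNReal.mul_ne_top hUt hUt)
            (ENNReal.mul_ne_top hcAt (heatBnd_ne_top (by linarith : (0:ℝ) < 2 * t) x y))
        have heq : ENNReal.ofReal (q ((2 : ℝ) ^ (n + 1) * s) x y) =
            ∫⁻ z, ENNReal.ofReal (q t x z * q t z y) := by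
          rw [hCK]; exact bridge_eq _ hmeas hnn hfin
        have hLL : lam⁻¹ * a ^ (2 ^ (n + 1)) = (L * L) * lam := by
          rw [hL]
          have : (2 : ℕ) ^ (n + 1) = 2 ^ n + 2 ^ n := by ring
          rw [this, pow_add]
          calc lam⁻¹ * (a ^ 2 ^ n * a ^ 2 ^ n)
              = lam⁻¹ * (a ^ 2 ^ n * a ^ 2 ^ n) * (lam⁻¹ * lam) := by
                rw [ENNReal.inv_mul_cancel hlam0 hlamt, mul_one]
            _ = (lam⁻¹ * a ^ 2 ^ n * (lam⁻¹ * a ^ 2 ^ n)) * lam := by ring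
        rw [heq, hLL, h2t]
        calc L * L * lam * heatBnd d α (2 * t) x y
            = (L * L) * (lam * heatBnd d α (2 * t) x y) := by ring
          _ ≤ (L * L) * ∫⁻ z, heatBnd d α t x z * heatBnd d α t z y :=
              mul_le_mul_right (convL' t ht0 x y) _
          _ = ∫⁻ z, (L * L) * (heatBnd d α t x z * heatBnd d α t z y) :=
              (lintegral_const_mul' _ _ (ENNReal.mul_ne_top hLt hLt)).symm
          _ = ∫⁻ z, (L * heatBnd d α t x z) * (L * heatBnd d α t z y) := by
              simp_rw [mul_mul_mul_comm]
          _ ≤ ∫⁻ z, ENNReal.ofReal (q t x z) * ENNReal.ofReal (q t z y) :=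
              lintegral_mono fun z =>
                mul_le_mul' (ih s hs1 hs2 x z).1 (ih s hs1 hs2 z y).1
          _ = ∫⁻ z, ENNReal.ofReal (q t x z * q t z y) := by simp_rw [hmul]
      · -- upper bound
        calc ENNReal.ofReal (q ((2 : ℝ) ^ (n + 1) * s) x y)
            ≤ ∫⁻ z, ENNReal.ofReal (q t x z * q t z y) := by
              rw [hCK]; exact bridge_le _ hmeas hnn
          _ ≤ (U * U) * (cA * heatBnd d α (2 * t) x y) := upper_lint
          _ = ((U * U) * cA) * heatBnd d α (2 * t) x y := by ring
          _ = cA⁻¹ * b ^ (2 ^ (n + 1)) * heatBnd d α ((2 : ℝ) ^ (n + 1) * s) x y := by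
              rw [hUU, h2t]
  -- real constants
  set lamR := lam.toReal with hlamR
  set cAR := cA.toReal with hcAR
  have hlamR0 : 0 < lamR := ENNReal.toReal_pos hlam0 hlamt
  have hlamR1 : lamR ≤ 1 := by
    have := ENNReal.toReal_mono (by norm_num) hlam_le1
    simpa using this
  have hcAR1 : 1 ≤ cAR := by
    have := ENNReal.toReal_mono hcAt hcA1
    simpa using this
  set aR := C₁⁻¹ * lamR with haR
  set bR := C₁ * cAR with hbR
  have haR0 : 0 < aR := mul_pos (by positivity) hlamR0
  have haR1 : aR ≤ 1 := mul_le_one₀ (inv_le_one_of_one_le₀ hC₁) hlamR0.le hlamR1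
  have hbR1 : 1 ≤ bR := one_le_mul_of_one_le_of_one_le hC₁ hcAR1
  have ha_eq : a = ENNReal.ofReal aR := by
    rw [hadef, haR, ENNReal.ofReal_mul (by positivity), ENNReal.ofReal_toReal hlamt]
  have hb_eq : b = ENNReal.ofReal bR := by
    rw [hbdef, hbR, ENNReal.ofReal_mul hC₁0.le, ENNReal.ofReal_toReal hcAt]
  set C₃ := 2 / T₀ * (Real.log bR + Real.log aR⁻¹) + 1 with hC₃def
  have hlogb : 0 ≤ Real.log bR := Real.log_nonneg hbR1
  have hloga : 0 ≤ Real.log aR⁻¹ := Real.log_nonneg (one_le_inv_iff₀.2 ⟨haR0, haR1⟩)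
  have hC₃ : 0 < C₃ := by
    rw [hC₃def]
    have : 0 ≤ 2 / T₀ * (Real.log bR + Real.log aR⁻¹) := by positivity
    linarith
  have hC₃half : C₃ * (T₀ / 2) = Real.log bR + Real.log aR⁻¹ + T₀ / 2 := by
    rw [hC₃def]
    field_simp
  have hbexp : bR ≤ Real.exp (C₃ * (T₀ / 2)) := by
    rw [hC₃half]
    calc bR = Real.exp (Real.log bR) := (Real.exp_log (by linarith)).symm
      _ ≤ _ := Real.exp_le_exp.2 (by linarith)
  have haexp : Real.exp (-(C₃ * (T₀ / 2))) ≤ aR := by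
    rw [hC₃half]
    calc Real.exp (-(Real.log bR + Real.log aR⁻¹ + T₀ / 2))
        ≤ Real.exp (-Real.log aR⁻¹) := Real.exp_le_exp.2 (by linarith)
      _ = Real.exp (Real.log aR) := by rw [Real.log_inv, neg_neg]
      _ = aR := Real.exp_log haR0
  refine ⟨C₁, hC₁, C₃, hC₃, ?_⟩
  intro t ht x y
  by_cases htT : t ≤ T₀
  · obtain ⟨hl, hu⟩ := hbd t ⟨ht, htT⟩ x y
    constructor
    · refine le_trans (mul_le_mul_left ?_ _) hl
      apply ENNReal.ofReal_le_ofReal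
      calc C₁⁻¹ * Real.exp (-C₃ * t) ≤ C₁⁻¹ * 1 := by
            apply mul_le_mul_of_nonneg_left _ (by positivity)
            apply Real.exp_le_one_iff.2
            nlinarith
        _ = C₁⁻¹ := mul_one _
    · refine hu.trans (mul_le_mul_left ?_ _)
      apply ENNReal.ofReal_le_ofReal
      nlinarith [Real.one_le_exp (show (0:ℝ) ≤ C₃ * t by positivity)]
  · push_neg at htT
    obtain ⟨n, s, ⟨hs1, hs2⟩, rfl⟩ := exists_scale hT₀ (lt_trans (by linarith) htT)
    have hs0 : 0 < s := lt_trans (by positivity) hs1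
    have h2n : (0:ℝ) < 2 ^ n := pow_pos two_pos n
    obtain ⟨kl, ku⟩ := key n s hs1 hs2 x y
    have hscale : C₃ * (T₀ / 2) * 2 ^ n ≤ C₃ * (2 ^ n * s) := by
      have : (0:ℝ) ≤ C₃ * 2 ^ n := by positivity
      calc C₃ * (T₀ / 2) * 2 ^ n = C₃ * 2 ^ n * (T₀ / 2) := by ring
        _ ≤ C₃ * 2 ^ n * s := mul_le_mul_of_nonneg_left hs1.le this
        _ = C₃ * (2 ^ n * s) := by ring
    constructor
    · refine le_trans (mul_le_mul_left ?_ _) kl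
      calc ENNReal.ofReal (C₁⁻¹ * Real.exp (-C₃ * (2 ^ n * s)))
          ≤ ENNReal.ofReal (aR ^ 2 ^ n) := by
            apply ENNReal.ofReal_le_ofReal
            calc C₁⁻¹ * Real.exp (-C₃ * (2 ^ n * s))
                ≤ 1 * Real.exp (-C₃ * (2 ^ n * s)) :=
                  mul_le_mul_of_nonneg_right (inv_le_one_of_one_le₀ hC₁)
                    (Real.exp_nonneg _)
              _ = Real.exp (-C₃ * (2 ^ n * s)) := one_mul _
              _ ≤ Real.exp ((2 ^ n : ℕ) * -(C₃ * (T₀ / 2))) := by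
                  apply Real.exp_le_exp.2
                  push_cast
                  nlinarith [hscale]
              _ = Real.exp (-(C₃ * (T₀ / 2))) ^ 2 ^ n := Real.exp_nat_mul _ _
              _ ≤ aR ^ 2 ^ n := pow_le_pow_left₀ (Real.exp_nonneg _) haexp _
        _ = a ^ 2 ^ n := by rw [ha_eq, ENNReal.ofReal_pow haR0.le]
        _ ≤ lam⁻¹ * a ^ 2 ^ n := by
            apply le_mul_of_one_le_left zero_le
            exact ENNReal.one_le_inv.2 hlam_le1
    · refine ku.trans (mul_le_mul_left ?_ _)
      calc cA⁻¹ * b ^ 2 ^ n ≤ 1 * b ^ 2 ^ n := by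
            apply mul_le_mul_left
            exact ENNReal.inv_le_one.2 hcA1
        _ = b ^ 2 ^ n := one_mul _
        _ = ENNReal.ofReal (bR ^ 2 ^ n) := by rw [hb_eq, ENNReal.ofReal_pow (by linarith)]
        _ ≤ ENNReal.ofReal (C₁ * Real.exp (C₃ * (2 ^ n * s))) := by
            apply ENNReal.ofReal_le_ofReal
            calc bR ^ 2 ^ n ≤ Real.exp (C₃ * (T₀ / 2)) ^ 2 ^ n :=
                  pow_le_pow_left₀ (by linarith) hbexp _
              _ = Real.exp ((2 ^ n : ℕ) * (C₃ * (T₀ / 2))) := (Real.exp_nat_mul _ _).symm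
              _ ≤ Real.exp (C₃ * (2 ^ n * s)) := by
                  apply Real.exp_le_exp.2
                  push_cast
                  nlinarith [hscale]
              _ ≤ C₁ * Real.exp (C₃ * (2 ^ n * s)) := by
                  nlinarith [Real.exp_nonneg (C₃ * (2 ^ n * s)), hC₁]
end
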